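/- Let W ≻ 0, λ ∈ (0,1), and A_K, Γ_w be matrices satisfying A_K W A_Kᵀ ⪯ λ² W and Γ_w ⪯ (1−λ)² W. Define the covariance recursion E_{ℓ+1} = A_K E_ℓ A_Kᵀ + Γ_w with E_0 = 0. Then for every ℓ ∈ ℕ, E_ℓ ⪯ (1 − λ^ℓ)² W. -/

import Mathlib

open Matrix

lemma psd_smul_aux {n : ℕ} {M : Matrix (Fin n) (Fin n) ℝ} (hM : M.PosSemidef)
    {c : ℝ} (hc : 0 ≤ c) : (c • M).PosSemidef := by
  constructor
  · show (c • M)ᴴ = c • M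
    rw [conjTranspose_smul, star_trivial, hM.1.eq]
  · intro x
    exact (hM.smul hc).2 x

theorem covariance_recursion_bound {n : ℕ}
    (A_K W Γ_w : Matrix (Fin n) (Fin n) ℝ)
    (hW : W.PosDef) (hΓ : Γ_w.PosSemidef)
    (lam : ℝ) (hlam0 : 0 < lam) (hlam1 : lam < 1)
    (h1 : (lam ^ 2 • W - A_K * W * A_Kᵀ).PosSemidef)
    (h2 : ((1 - lam) ^ 2 • W - Γ_w).PosSemidef)
    (E : ℕ → Matrix (Fin n) (Fin n) ℝ)
    (hE0 : E 0 = 0)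
    (hErec : ∀ ℓ, E (ℓ + 1) = A_K * E ℓ * A_Kᵀ + Γ_w) :
    ∀ ℓ, ((1 - lam ^ ℓ) ^ 2 • W - E ℓ).PosSemidef := by
  intro ℓ
  induction ℓ with
  | zero =>
    simp only [hE0, pow_zero, sub_self, ne_eq, OfNat.ofNat_ne_zero,
      not_false_eq_true, zero_pow, zero_smul, sub_zero]
    exact PosSemidef.zero
  | succ ℓ ih =>
    have hpow : lam ^ ℓ ≤ 1 := pow_le_one₀ hlam0.le hlam1.le
    have key : (1 - lam ^ (ℓ + 1)) ^ 2 • W - E (ℓ + 1)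
        = (2 * (lam * (1 - lam ^ ℓ)) * (1 - lam)) • W
          + ((1 - lam ^ ℓ) ^ 2 • (lam ^ 2 • W - A_K * W * A_Kᵀ)
            + A_K * ((1 - lam ^ ℓ) ^ 2 • W - E ℓ) * A_Kᵀ)
          + ((1 - lam) ^ 2 • W - Γ_w) := by
      have hc : (1 - lam ^ (ℓ + 1)) ^ 2
          = 2 * (lam * (1 - lam ^ ℓ)) * (1 - lam) + (1 - lam ^ ℓ) ^ 2 * lam ^ 2
            + (1 - lam) ^ 2 := by rw [pow_succ]; ring
      rw [hErec, hc]
      simp only [smul_sub, Matrix.mul_smul, Matrix.smul_mul, Matrix.mul_sub,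
        Matrix.sub_mul, smul_smul, add_smul]
      module
    rw [key]
    refine PosSemidef.add (PosSemidef.add (psd_smul_aux hW.posSemidef ?_)
      (PosSemidef.add (psd_smul_aux h1 (sq_nonneg _)) ?_)) h2
    · have h3 : 0 ≤ 1 - lam ^ ℓ := by linarith
      have h4 : 0 ≤ 1 - lam := by linarith
      positivity
    · have := ih.mul_mul_conjTranspose_same A_K
      simpa using this
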